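/- For any λ, λ′ ≥ 0 and any probability measures f, f′ on ℝ, the compound Poisson distributions satisfy dtv( CPoi(λ, f), CPoi(λ′, f′) ) ≤ min{λ, λ′} · dtv(f, f′) + |λ − λ′|. -/

import Mathlib

open MeasureTheory

noncomputable section

/-- Convolution of two measures on ℝ (law of the sum of independent random
variables). -/
def mconv (μ ν : Measure ℝ) : Measure ℝ :=
  Measure.map (fun z : ℝ × ℝ => z.1 + z.2) (μ.prod ν)

/-- `k`-fold convolution power of a measure on ℝ. -/
def mconvPow (f : Measure ℝ) : ℕ → Measure ℝ
  | 0 => Measure.dirac 0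
  | k + 1 => mconv (mconvPow f k) f

/-- The compound Poisson distribution `CPoi(λ, f)` as a measure on ℝ. -/
def cpoiM (lam : ℝ) (f : Measure ℝ) : Measure ℝ :=
  Measure.sum fun k : ℕ =>
    (ENNReal.ofReal (Real.exp (-lam) * lam ^ k / (Nat.factorial k))) • mconvPow f k

/-- Total variation distance between measures on ℝ:
`sup_A |μ(A) - ν(A)|` over measurable sets `A`. -/
def dtvM (μ ν : Measure ℝ) : ℝ :=
  ⨆ A : {s : Set ℝ // MeasurableSet s}, |(μ A).toReal - (ν A).toReal|

lemma measurable_add2 : Measurable (fun z : ℝ × ℝ => z.1 + z.2) :=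
  measurable_fst.add measurable_snd

instance mconv_prob (μ ν : Measure ℝ) [IsProbabilityMeasure μ] [IsProbabilityMeasure ν] :
    IsProbabilityMeasure (mconv μ ν) :=
  Measure.isProbabilityMeasure_map measurable_add2.aemeasurable

instance mconvPow_prob (f : Measure ℝ) [IsProbabilityMeasure f] (k : ℕ) :
    IsProbabilityMeasure (mconvPow f k) := by
  induction k with
  | zero => rw [mconvPow]; infer_instance
  | succ k ih => rw [mconvPow]; exact mconv_prob _ _

instance : Nonempty {s : Set ℝ // MeasurableSet s} := ⟨⟨∅, MeasurableSet.empty⟩⟩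

lemma toReal_le_one (μ : Measure ℝ) [IsProbabilityMeasure μ] (A : Set ℝ) :
    (μ A).toReal ≤ 1 := by
  have := ENNReal.toReal_mono (by simp : (1 : ENNReal) ≠ ⊤) (prob_le_one (μ := μ) (s := A))
  simpa using this

lemma dtvM_bdd (μ ν : Measure ℝ) [IsProbabilityMeasure μ] [IsProbabilityMeasure ν] :
    BddAbove (Set.range fun A : {s : Set ℝ // MeasurableSet s} =>
      |(μ A).toReal - (ν A).toReal|) := by
  refine ⟨1, ?_⟩
  rintro x ⟨B, rfl⟩
  have h1 := toReal_le_one μ B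
  have h2 := toReal_le_one ν B
  have h3 : (0:ℝ) ≤ (μ (B:Set ℝ)).toReal := ENNReal.toReal_nonneg
  have h4 : (0:ℝ) ≤ (ν (B:Set ℝ)).toReal := ENNReal.toReal_nonneg
  rw [abs_le]; constructor <;> linarith

lemma abs_le_dtvM (μ ν : Measure ℝ) [IsProbabilityMeasure μ] [IsProbabilityMeasure ν]
    {A : Set ℝ} (hA : MeasurableSet A) :
    |(μ A).toReal - (ν A).toReal| ≤ dtvM μ ν :=
  le_ciSup (dtvM_bdd μ ν) ⟨A, hA⟩

lemma dtvM_le_of (μ ν : Measure ℝ) {c : ℝ}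
    (h : ∀ A : Set ℝ, MeasurableSet A → |(μ A).toReal - (ν A).toReal| ≤ c) :
    dtvM μ ν ≤ c :=
  ciSup_le fun A => h A A.2

lemma dtvM_nonneg (μ ν : Measure ℝ) [IsProbabilityMeasure μ] [IsProbabilityMeasure ν] :
    0 ≤ dtvM μ ν :=
  le_trans (abs_nonneg _) (abs_le_dtvM μ ν MeasurableSet.empty)

lemma dtvM_triangle (μ ν ρ : Measure ℝ) [IsProbabilityMeasure μ] [IsProbabilityMeasure ν]
    [IsProbabilityMeasure ρ] : dtvM μ ρ ≤ dtvM μ ν + dtvM ν ρ := by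
  refine dtvM_le_of _ _ fun A hA => ?_
  calc |(μ A).toReal - (ρ A).toReal|
      ≤ |(μ A).toReal - (ν A).toReal| + |(ν A).toReal - (ρ A).toReal| := abs_sub_le _ _ _
    _ ≤ dtvM μ ν + dtvM ν ρ := add_le_add (abs_le_dtvM μ ν hA) (abs_le_dtvM ν ρ hA)

lemma mconv_apply_right (μ ν : Measure ℝ) [SFinite ν] {A : Set ℝ} (hA : MeasurableSet A) :
    mconv μ ν A = ∫⁻ x, ν {y | x + y ∈ A} ∂μ := by
  rw [mconv, Measure.map_apply measurable_add2 hA, Measure.prod_apply (measurable_add2 hA)]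
  rfl

lemma mconv_apply_left (μ ν : Measure ℝ) [SFinite μ] [SFinite ν] {A : Set ℝ} (hA : MeasurableSet A) :
    mconv μ ν A = ∫⁻ y, μ {x | x + y ∈ A} ∂ν := by
  rw [mconv, Measure.map_apply measurable_add2 hA, Measure.prod_apply_symm (measurable_add2 hA)]
  rfl

lemma dtv_lintegral_le (ρ : Measure ℝ) [IsProbabilityMeasure ρ]
    (g h : ℝ → ENNReal) (hg1 : ∀ y, g y ≤ 1) (hh1 : ∀ y, h y ≤ 1)
    {D : ℝ} (hD : 0 ≤ D)
    (hpt : ∀ y, |(g y).toReal - (h y).toReal| ≤ D) :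
    |(∫⁻ y, g y ∂ρ).toReal - (∫⁻ y, h y ∂ρ).toReal| ≤ D := by
  have gne : ∀ y, g y ≠ ⊤ := fun y => ne_top_of_le_ne_top (by simp) (hg1 y)
  have hne : ∀ y, h y ≠ ⊤ := fun y => ne_top_of_le_ne_top (by simp) (hh1 y)
  have key : ∀ (g h : ℝ → ENNReal), (∀ y, g y ≠ ⊤) → (∀ y, h y ≠ ⊤) → (∀ y, h y ≤ 1) →
      (∀ y, (g y).toReal - (h y).toReal ≤ D) →
      (∫⁻ y, g y ∂ρ).toReal - (∫⁻ y, h y ∂ρ).toReal ≤ D := by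
    intro g h gne hne hh1 hpt
    have hmono : ∫⁻ y, g y ∂ρ ≤ ∫⁻ y, h y ∂ρ + ENNReal.ofReal D := by
      have : ∫⁻ y, g y ∂ρ ≤ ∫⁻ y, (h y + ENNReal.ofReal D) ∂ρ := by
        apply lintegral_mono
        intro y
        have h1 : (g y).toReal ≤ (h y).toReal + D := by linarith [hpt y]
        calc g y = ENNReal.ofReal (g y).toReal := (ENNReal.ofReal_toReal (gne y)).symm
          _ ≤ ENNReal.ofReal ((h y).toReal + D) := ENNReal.ofReal_le_ofReal h1
          _ = ENNReal.ofReal (h y).toReal + ENNReal.ofReal D :=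
              ENNReal.ofReal_add ENNReal.toReal_nonneg hD
          _ = h y + ENNReal.ofReal D := by rw [ENNReal.ofReal_toReal (hne y)]
      rwa [lintegral_add_right _ measurable_const, lintegral_const,
        measure_univ, mul_one] at this
    have hfin : ∫⁻ y, h y ∂ρ ≠ ⊤ := by
      refine ne_top_of_le_ne_top (by simp : (1:ENNReal) ≠ ⊤) ?_
      calc ∫⁻ y, h y ∂ρ ≤ ∫⁻ _, 1 ∂ρ := lintegral_mono hh1
        _ = 1 := by simp
    have := ENNReal.toReal_mono (by finiteness) hmono
    rw [ENNReal.toReal_add hfin ENNReal.ofReal_ne_top, ENNReal.toReal_ofReal hD] at this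
    linarith
  rw [abs_le]
  constructor
  · have := key h g hne gne hg1 (fun y => by
      have := hpt y; rw [abs_le] at this; linarith [this.1])
    linarith
  · exact key g h gne hne hh1 (fun y => (abs_le.mp (hpt y)).2)

lemma dtvM_mconv_right (μ ν ρ : Measure ℝ) [IsProbabilityMeasure μ] [IsProbabilityMeasure ν]
    [IsProbabilityMeasure ρ] : dtvM (mconv μ ρ) (mconv ν ρ) ≤ dtvM μ ν := by
  refine dtvM_le_of _ _ fun A hA => ?_
  rw [mconv_apply_left μ ρ hA, mconv_apply_left ν ρ hA]
  exact dtv_lintegral_le ρ _ _ (fun y => prob_le_one) (fun y => prob_le_one)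
    (dtvM_nonneg μ ν)
    (fun y => abs_le_dtvM μ ν (hA.preimage (measurable_add_const y)))

lemma dtvM_mconv_left (μ ρ ρ' : Measure ℝ) [IsProbabilityMeasure μ] [IsProbabilityMeasure ρ]
    [IsProbabilityMeasure ρ'] : dtvM (mconv μ ρ) (mconv μ ρ') ≤ dtvM ρ ρ' := by
  refine dtvM_le_of _ _ fun A hA => ?_
  rw [mconv_apply_right μ ρ hA, mconv_apply_right μ ρ' hA]
  exact dtv_lintegral_le μ _ _ (fun x => prob_le_one) (fun x => prob_le_one)
    (dtvM_nonneg ρ ρ')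
    (fun x => abs_le_dtvM ρ ρ' (hA.preimage (measurable_const_add x)))

lemma dtvM_mconvPow (f f' : Measure ℝ) [IsProbabilityMeasure f] [IsProbabilityMeasure f']
    (k : ℕ) : dtvM (mconvPow f k) (mconvPow f' k) ≤ k * dtvM f f' := by
  induction k with
  | zero =>
    rw [mconvPow]
    simpa using dtvM_le_of (Measure.dirac 0) (mconvPow f' 0) (fun A hA => by simp [mconvPow]) 
  | succ k ih =>
    rw [mconvPow, mconvPow]
    calc dtvM (mconv (mconvPow f k) f) (mconv (mconvPow f' k) f')
        ≤ dtvM (mconv (mconvPow f k) f) (mconv (mconvPow f' k) f)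
          + dtvM (mconv (mconvPow f' k) f) (mconv (mconvPow f' k) f') := dtvM_triangle _ _ _
      _ ≤ dtvM (mconvPow f k) (mconvPow f' k) + dtvM f f' :=
          add_le_add (dtvM_mconv_right _ _ _) (dtvM_mconv_left _ _ _)
      _ ≤ k * dtvM f f' + dtvM f f' := by
          have := dtvM_nonneg f f'; linarith [ih]
      _ = (k + 1 : ℕ) * dtvM f f' := by push_cast; ring

section Pois
variable (lam : ℝ)

def poisW (lam : ℝ) (k : ℕ) : ℝ := Real.exp (-lam) * lam ^ k / (Nat.factorial k)

lemma poisW_nonneg (hl : 0 ≤ lam) (k : ℕ) : 0 ≤ poisW lam k := by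
  unfold poisW; positivity

lemma poisW_summable : Summable (poisW lam) := by
  have : poisW lam = fun k => Real.exp (-lam) * (lam ^ k / (Nat.factorial k)) := by
    funext k; unfold poisW; ring
  rw [this]
  exact (Real.summable_pow_div_factorial lam).mul_left _

lemma tsum_pow_div_factorial : ∑' k : ℕ, lam ^ k / (Nat.factorial k) = Real.exp lam := by
  rw [Real.exp_eq_exp_ℝ, NormedSpace.exp_eq_tsum_div]

lemma poisW_tsum : ∑' k, poisW lam k = 1 := by
  have : ∑' k, poisW lam k = Real.exp (-lam) * ∑' k : ℕ, lam ^ k / (Nat.factorial k) := by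
    rw [← tsum_mul_left]
    congr 1; funext k; unfold poisW; ring
  rw [this, tsum_pow_div_factorial, ← Real.exp_add]
  simp

lemma poisW_succ (k : ℕ) : ((k:ℝ) + 1) * poisW lam (k + 1) = lam * poisW lam k := by
  unfold poisW
  rw [Nat.factorial_succ]
  have h1 : ((k:ℝ) + 1) ≠ 0 := by positivity
  have h2 : ((Nat.factorial k : ℝ)) ≠ 0 := by
    exact_mod_cast Nat.factorial_ne_zero k
  push_cast
  field_simp
  ring

lemma poisW_mul_summable : Summable (fun k : ℕ => (k : ℝ) * poisW lam k) := by
  have hs : Summable (fun k : ℕ => ((k:ℝ) + 1) * poisW lam (k + 1)) := by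
    have : (fun k : ℕ => ((k:ℝ) + 1) * poisW lam (k + 1)) = fun k => lam * poisW lam k := by
      funext k; exact poisW_succ lam k
    rw [this]
    exact (poisW_summable lam).mul_left _
  have hs2 : Summable (fun k : ℕ => ((k + 1 : ℕ) : ℝ) * poisW lam (k + 1)) := by
    convert hs using 2 with k
    push_cast; ring
  exact (summable_nat_add_iff 1).mp hs2

lemma poisW_mul_tsum : ∑' k : ℕ, (k : ℝ) * poisW lam k = lam := by
  rw [Summable.tsum_eq_zero_add (poisW_mul_summable lam)]
  simp only [Nat.cast_zero, zero_mul, zero_add]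
  have : (fun k : ℕ => ((k + 1 : ℕ) : ℝ) * poisW lam (k + 1)) = fun k => lam * poisW lam k := by
    funext k; push_cast; exact poisW_succ lam k
  rw [this, tsum_mul_left, poisW_tsum, mul_one]

end Pois

lemma real_core {a b p q : ℕ → ℝ} {D : ℝ}
    (ha0 : ∀ k, 0 ≤ a k) (hb0 : ∀ k, 0 ≤ b k)
    (hsa : Summable a) (hsb : Summable b)
    (hta : ∑' k, a k = 1) (htb : ∑' k, b k = 1)
    (hp0 : ∀ k, 0 ≤ p k) (hp1 : ∀ k, p k ≤ 1)
    (hq0 : ∀ k, 0 ≤ q k) (hq1 : ∀ k, q k ≤ 1)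
    (hD : 0 ≤ D) (hpq : ∀ k, |p k - q k| ≤ (k : ℝ) * D)
    (hska : Summable (fun k : ℕ => (k : ℝ) * a k)) :
    |(∑' k, a k * p k) - ∑' k, b k * q k| ≤
      D * (∑' k : ℕ, (k : ℝ) * min (a k) (b k)) + (1 - ∑' k, min (a k) (b k)) := by
  set c : ℕ → ℝ := fun k => min (a k) (b k) with hc
  have hc0 : ∀ k, 0 ≤ c k := fun k => le_min (ha0 k) (hb0 k)
  have hca : ∀ k, c k ≤ a k := fun k => min_le_left _ _
  have hcb : ∀ k, c k ≤ b k := fun k => min_le_right _ _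
  have hsc : Summable c := hsa.of_nonneg_of_le hc0 hca
  have hsap : Summable (fun k => a k * p k) :=
    hsa.of_nonneg_of_le (fun k => mul_nonneg (ha0 k) (hp0 k))
      (fun k => by nlinarith [ha0 k, hp1 k, hp0 k])
  have hsbq : Summable (fun k => b k * q k) :=
    hsb.of_nonneg_of_le (fun k => mul_nonneg (hb0 k) (hq0 k))
      (fun k => by nlinarith [hb0 k, hq1 k, hq0 k])
  have hscp : Summable (fun k => c k * p k) :=
    hsc.of_nonneg_of_le (fun k => mul_nonneg (hc0 k) (hp0 k))
      (fun k => by nlinarith [hc0 k, hp1 k, hp0 k])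
  have hscq : Summable (fun k => c k * q k) :=
    hsc.of_nonneg_of_le (fun k => mul_nonneg (hc0 k) (hq0 k))
      (fun k => by nlinarith [hc0 k, hq1 k, hq0 k])
  have hskc : Summable (fun k : ℕ => (k : ℝ) * c k) :=
    hska.of_nonneg_of_le (fun k => mul_nonneg (Nat.cast_nonneg k) (hc0 k))
      (fun k => mul_le_mul_of_nonneg_left (hca k) (Nat.cast_nonneg k))
  have hsacp : Summable (fun k => (a k - c k) * p k) := by
    have : (fun k => (a k - c k) * p k) = fun k => a k * p k - c k * p k := by
      funext k; ring
    rw [this]; exact hsap.sub hscp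
  have hsbcq : Summable (fun k => (b k - c k) * q k) := by
    have : (fun k => (b k - c k) * q k) = fun k => b k * q k - c k * q k := by
      funext k; ring
    rw [this]; exact hsbq.sub hscq
  have hscpq : Summable (fun k => c k * (p k - q k)) := by
    have : (fun k => c k * (p k - q k)) = fun k => c k * p k - c k * q k := by
      funext k; ring
    rw [this]; exact hscp.sub hscq
  -- decomposition
  have hdec : (∑' k, a k * p k) - ∑' k, b k * q k =
      (∑' k, c k * (p k - q k)) + (∑' k, (a k - c k) * p k) - ∑' k, (b k - c k) * q k := by
    rw [← Summable.tsum_add hscpq hsacp, ← Summable.tsum_sub (hscpq.add hsacp) hsbcq, ← Summable.tsum_sub hsap hsbq]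
    congr 1; funext k; ring
  -- bounds
  have hDkc : Summable (fun k : ℕ => D * ((k : ℝ) * c k)) := hskc.mul_left D
  have h1 : ∑' k, c k * (p k - q k) ≤ D * ∑' k : ℕ, (k : ℝ) * c k := by
    rw [← tsum_mul_left]
    refine Summable.tsum_le_tsum (fun k => ?_) hscpq hDkc
    have h := (abs_le.mp (hpq k)).2
    have := hc0 k
    nlinarith
  have h1' : -(D * ∑' k : ℕ, (k : ℝ) * c k) ≤ ∑' k, c k * (p k - q k) := by
    rw [← tsum_mul_left, ← tsum_neg]
    refine Summable.tsum_le_tsum (fun k => ?_) hDkc.neg hscpq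
    have h := (abs_le.mp (hpq k)).1
    have := hc0 k
    nlinarith [hc0 k]
  have h2 : ∑' k, (a k - c k) * p k ≤ 1 - ∑' k, c k := by
    have : ∑' k, (a k - c k) * p k ≤ ∑' k, (a k - c k) := by
      refine Summable.tsum_le_tsum (fun k => ?_) hsacp (hsa.sub hsc)
      have h1 := hca k; have h2 := hp1 k; have h3 := hp0 k
      nlinarith
    rwa [Summable.tsum_sub hsa hsc, hta] at this
  have h2' : 0 ≤ ∑' k, (a k - c k) * p k :=
    tsum_nonneg fun k => mul_nonneg (by linarith [hca k]) (hp0 k)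
  have h3 : ∑' k, (b k - c k) * q k ≤ 1 - ∑' k, c k := by
    have : ∑' k, (b k - c k) * q k ≤ ∑' k, (b k - c k) := by
      refine Summable.tsum_le_tsum (fun k => ?_) hsbcq (hsb.sub hsc)
      have h1 := hcb k; have h2 := hq1 k; have h3 := hq0 k
      nlinarith
    rwa [Summable.tsum_sub hsb hsc, htb] at this
  have h3' : 0 ≤ ∑' k, (b k - c k) * q k :=
    tsum_nonneg fun k => mul_nonneg (by linarith [hcb k]) (hq0 k)
  rw [abs_le]
  constructor <;> [linarith [hdec, h1', h2', h3]; linarith [hdec, h1, h2, h3']]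

lemma cpoi_apply (lam : ℝ) (hl : 0 ≤ lam) (f : Measure ℝ) [IsProbabilityMeasure f]
    {A : Set ℝ} (hA : MeasurableSet A) :
    ((cpoiM lam f) A).toReal = ∑' k, poisW lam k * (mconvPow f k A).toReal := by
  rw [cpoiM, Measure.sum_apply _ hA]
  simp only [Measure.smul_apply, smul_eq_mul]
  rw [ENNReal.tsum_toReal_eq
    (fun k => ENNReal.mul_ne_top ENNReal.ofReal_ne_top (measure_ne_top _ _))]
  congr 1; funext k
  rw [ENNReal.toReal_mul]
  show (ENNReal.ofReal (poisW lam k)).toReal * ((mconvPow f k) A).toReal = _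
  rw [ENNReal.toReal_ofReal (poisW_nonneg lam hl k)]


/-- **Lemma (compound Poisson perturbation).**
For any `λ, λ' ≥ 0` and probability measures `f, f'` on ℝ,
`dtv(CPoi(λ, f), CPoi(λ', f')) ≤ min{λ, λ'} dtv(f, f') + |λ - λ'|`. -/
theorem cpoi_perturbation
    (lam lam' : ℝ) (hl : 0 ≤ lam) (hl' : 0 ≤ lam')
    (f f' : Measure ℝ) [IsProbabilityMeasure f] [IsProbabilityMeasure f'] :
    dtvM (cpoiM lam f) (cpoiM lam' f') ≤ min lam lam' * dtvM f f' + |lam - lam'| := by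

  set D := dtvM f f' with hDdef
  have hD : 0 ≤ D := dtvM_nonneg f f'
  set a := poisW lam with ha
  set b := poisW lam' with hb
  set m := min lam lam' with hm
  set M := max lam lam' with hM
  have hmM : m ≤ M := min_le_max
  have hm0 : 0 ≤ m := le_min hl hl'
  -- the minorant
  set w : ℕ → ℝ := fun k => Real.exp (-M) * m ^ k / (Nat.factorial k) with hw
  have hwa : ∀ k, w k ≤ min (a k) (b k) := by
    intro k
    have e1 : Real.exp (-M) ≤ Real.exp (-lam) := Real.exp_le_exp.mpr (by
      simp only [neg_le_neg_iff]; exact le_max_left _ _)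
    have e2 : Real.exp (-M) ≤ Real.exp (-lam') := Real.exp_le_exp.mpr (by
      simp only [neg_le_neg_iff]; exact le_max_right _ _)
    have p1 : m ^ k ≤ lam ^ k := pow_le_pow_left₀ hm0 (min_le_left _ _) k
    have p2 : m ^ k ≤ lam' ^ k := pow_le_pow_left₀ hm0 (min_le_right _ _) k
    have fk : (0:ℝ) < (Nat.factorial k : ℝ) := by
      exact_mod_cast Nat.factorial_pos k
    refine le_min ?_ ?_
    · rw [ha]; unfold poisW
      exact div_le_div_of_nonneg_right
        (mul_le_mul e1 p1 (by positivity) (Real.exp_nonneg _)) fk.le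
    · rw [hb]; unfold poisW
      exact div_le_div_of_nonneg_right
        (mul_le_mul e2 p2 (by positivity) (Real.exp_nonneg _)) fk.le
  have hwsum : Summable w := by
    have : w = fun k => Real.exp (-M) * (m ^ k / (Nat.factorial k)) := by
      funext k; rw [hw]; ring
    rw [this]; exact (Real.summable_pow_div_factorial m).mul_left _
  have hwts : ∑' k, w k = Real.exp (m - M) := by
    have : ∑' k, w k = Real.exp (-M) * ∑' k : ℕ, m ^ k / (Nat.factorial k) := by
      rw [← tsum_mul_left]; congr 1; funext k; rw [hw]; ring
    rw [this, tsum_pow_div_factorial, ← Real.exp_add]; ring_nf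
  -- summability of min
  have ha0 : ∀ k, 0 ≤ a k := poisW_nonneg lam hl
  have hb0 : ∀ k, 0 ≤ b k := poisW_nonneg lam' hl'
  have hsa : Summable a := poisW_summable lam
  have hsb : Summable b := poisW_summable lam'
  have hsmin : Summable (fun k => min (a k) (b k)) :=
    hsa.of_nonneg_of_le (fun k => le_min (ha0 k) (hb0 k)) (fun k => min_le_left _ _)
  have hska : Summable (fun k : ℕ => (k : ℝ) * a k) := poisW_mul_summable lam
  have hskb : Summable (fun k : ℕ => (k : ℝ) * b k) := poisW_mul_summable lam'
  have hskmin : Summable (fun k : ℕ => (k : ℝ) * min (a k) (b k)) :=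
    hska.of_nonneg_of_le
      (fun k => mul_nonneg (Nat.cast_nonneg k) (le_min (ha0 k) (hb0 k)))
      (fun k => mul_le_mul_of_nonneg_left (min_le_left _ _) (Nat.cast_nonneg k))
  -- bound on ∑ k min
  have hkmin : ∑' k : ℕ, (k : ℝ) * min (a k) (b k) ≤ m := by
    refine le_min ?_ ?_
    · calc ∑' k : ℕ, (k : ℝ) * min (a k) (b k) ≤ ∑' k : ℕ, (k : ℝ) * a k :=
          Summable.tsum_le_tsum (fun k =>
            mul_le_mul_of_nonneg_left (min_le_left _ _) (Nat.cast_nonneg k)) hskmin hska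
        _ = lam := poisW_mul_tsum lam
    · calc ∑' k : ℕ, (k : ℝ) * min (a k) (b k) ≤ ∑' k : ℕ, (k : ℝ) * b k :=
          Summable.tsum_le_tsum (fun k =>
            mul_le_mul_of_nonneg_left (min_le_right _ _) (Nat.cast_nonneg k)) hskmin hskb
        _ = lam' := poisW_mul_tsum lam'
  -- bound on 1 - ∑ min
  have hminlow : Real.exp (m - M) ≤ ∑' k, min (a k) (b k) := by
    rw [← hwts]; exact Summable.tsum_le_tsum hwa hwsum hsmin
  have honem : 1 - (∑' k, min (a k) (b k)) ≤ |lam - lam'| := by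
    have h1 : (m - M) + 1 ≤ Real.exp (m - M) := Real.add_one_le_exp _
    have h2 : M - m = |lam - lam'| := by
      rw [hM, hm, abs_sub_comm]; exact max_sub_min_eq_abs _ _
    linarith
  -- per-set bound
  refine dtvM_le_of _ _ fun A hA => ?_
  rw [cpoi_apply lam hl f hA, cpoi_apply lam' hl' f' hA]
  have hres := real_core (a := a) (b := b)
    (p := fun k => (mconvPow f k A).toReal) (q := fun k => (mconvPow f' k A).toReal)
    (D := D) ha0 hb0 hsa hsb (poisW_tsum lam) (poisW_tsum lam')
    (fun k => ENNReal.toReal_nonneg) (fun k => toReal_le_one _ _)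
    (fun k => ENNReal.toReal_nonneg) (fun k => toReal_le_one _ _)
    hD
    (fun k => le_trans (abs_le_dtvM (mconvPow f k) (mconvPow f' k) hA)
      (dtvM_mconvPow f f' k))
    hska
  refine le_trans hres ?_
  have : D * (∑' k : ℕ, (k : ℝ) * min (a k) (b k)) ≤ m * D := by
    rw [mul_comm m D]
    exact mul_le_mul_of_nonneg_left hkmin hD
  linarith

end
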